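/- Let k, τ⁻, τ⁺, F be real numbers with k > 0, τ⁻ ≥ 0, τ⁺ ≥ 0, and F ≥ e·k·τ⁻. Then for every x with 0 ≤ x < k, (1 − exp(−k/(k−x)))·(F − x·τ⁻) ≥ (1 − 1/e)·F. -/

import Mathlib

open Real

/-- Second part of the best-bound corollary: the Case-3 bound with `s = 0`; if
`F ≥ e k τ⁻`, then `(1 − e^{−k/(k−x)})(F − x τ⁻) ≥ (1 − 1/e) F` for all `x ∈ [0, k)`. -/
theorem best_bound_case3 (k τm τp F : ℝ) (hk : 0 < k)
    (hτm : 0 ≤ τm) (hτp : 0 ≤ τp) (hF : Real.exp 1 * k * τm ≤ F) :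
    ∀ x : ℝ, 0 ≤ x → x < k →
      (1 - 1 / Real.exp 1) * F ≤ (1 - Real.exp (-k / (k - x))) * (F - x * τm) := by
  intro x hx hxk
  have hu : 0 < k - x := by linarith
  set t : ℝ := k / (k - x) with ht_def
  have ht1 : 1 ≤ t := (one_le_div hu).mpr (by linarith)
  set e1 : ℝ := Real.exp 1 with he1
  have he1pos : 0 < e1 := Real.exp_pos 1
  have he1gt : 1 < e1 := by
    have := Real.add_one_le_exp (1 : ℝ); simpa [he1] using by linarith [Real.add_one_lt_exp (by norm_num : (1:ℝ) ≠ 0)]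
  set E : ℝ := Real.exp t with hE_def
  have hEpos : 0 < E := Real.exp_pos t
  -- key: E ≥ 1 + (e1 - 1) * t
  have hkey : 1 + (e1 - 1) * t ≤ E := by
    have h1 : t ≤ Real.exp (t - 1) := by
      have := Real.add_one_le_exp (t - 1); linarith
    have h2 : E = e1 * Real.exp (t - 1) := by
      rw [hE_def, he1, ← Real.exp_add]; ring_nf
    have h3 : e1 * t ≤ E := by
      rw [h2]; exact mul_le_mul_of_nonneg_left h1 he1pos.le
    nlinarith
  have hEe1 : e1 ≤ E := by nlinarith
  -- rewrite exp(-k/(k-x)) = E⁻¹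
  have hexp : Real.exp (-k / (k - x)) = E⁻¹ := by
    rw [hE_def, ht_def, ← Real.exp_neg, neg_div]
  -- F ≥ e1 * t * ((k - x) * τm)
  have hFt : e1 * t * ((k - x) * τm) ≤ F := by
    have : e1 * t * ((k - x) * τm) = e1 * k * τm := by
      rw [ht_def]; linear_combination e1 * τm * div_mul_cancel₀ k hu.ne'
    linarith [this ▸ hF]
  -- x * τm = (t - 1) * ((k - x) * τm)
  have hx_eq : x * τm = (t - 1) * ((k - x) * τm) := by
    have : (t - 1) * (k - x) = x := by rw [ht_def]; linear_combination div_mul_cancel₀ k hu.ne'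
    nlinarith [this]
  set v : ℝ := (k - x) * τm with hv_def
  have hv : 0 ≤ v := mul_nonneg hu.le hτm
  -- main multiplied-out inequality
  have hmain : (e1 - 1) * F * E ≤ (E - 1) * (F - (t - 1) * v) * e1 := by
    have h1 : 0 ≤ (F - e1 * t * v) * (E - e1) := by
      apply mul_nonneg <;> linarith
    have h2 : 0 ≤ e1 * v * (E + t - t * e1 - 1) := by
      apply mul_nonneg (mul_nonneg he1pos.le hv); nlinarith
    nlinarith
  -- convert to goal
  rw [hexp, hx_eq]
  have hL : 1 - 1 / e1 = (e1 - 1) / e1 := by field_simp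
  have hR : 1 - E⁻¹ = (E - 1) / E := by field_simp
  rw [hL, hR, div_mul_eq_mul_div, div_mul_eq_mul_div, div_le_div_iff₀ he1pos hEpos]
  exact hmain
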